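/- Let P be an r × s 0-1 matrix and P_d its d-dimensional embedding (dimensions r × s × 1 × ... × 1). Then sat(n, P_d, d) ≥ n^{d-2} · sat(n, P): any d-dimensional n × ... × n 0-1 matrix C saturating for P_d has, for each fixed choice of coordinates (x_3,...,x_d), a 2-dimensional slice that is an n × n matrix saturating for P, and hence C has at least n^{d-2} · sat(n, P) ones. -/

import Mathlib

open Nat Finset Filter

/-- 0-1 matrix `A` contains 0-1 matrix `P`: some submatrix of `A`, with rows and
columns chosen in increasing order, has ones wherever `P` has ones. -/
def Contains {r s n m : ℕ} (P : Fin r → Fin s → Bool) (A : Fin n → Fin m → Bool) : Prop :=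
  ∃ f : Fin r → Fin n, ∃ g : Fin s → Fin m,
    StrictMono f ∧ StrictMono g ∧ ∀ i j, P i j = true → A (f i) (g j) = true

/-- The matrix obtained from `A` by changing entry `(i, j)` to a one. -/
def flipEntry {n m : ℕ} (A : Fin n → Fin m → Bool) (i : Fin n) (j : Fin m) :
    Fin n → Fin m → Bool :=
  fun i' j' => if i' = i ∧ j' = j then true else A i' j'

/-- `A` is saturating for `P`: `A` avoids `P`, but changing any zero of `A` to a one
creates a copy of `P`. -/
def Saturating {r s n m : ℕ} (P : Fin r → Fin s → Bool) (A : Fin n → Fin m → Bool) : Prop :=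
  ¬ Contains P A ∧ ∀ i j, A i j = false → Contains P (flipEntry A i j)

/-- Number of one entries of a 0-1 matrix. -/
def onesCount {n m : ℕ} (A : Fin n → Fin m → Bool) : ℕ :=
  (Finset.univ.filter fun p : Fin n × Fin m => A p.1 p.2 = true).card

/-- `sat n P`: minimum possible number of ones in an `n × n` 0-1 matrix saturating for `P`. -/
noncomputable def sat (n : ℕ) {r s : ℕ} (P : Fin r → Fin s → Bool) : ℕ :=
  sInf {m | ∃ A : Fin n → Fin n → Bool, Saturating P A ∧ onesCount A = m}

/-- A `d`-dimensional 0-1 matrix of side `n` whose extra `d - 2 = e` dimensions are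
indexed by `Fin e → Fin n`. Containment of the `d`-dimensional embedding `P_d` of a
2-dimensional pattern `P` (of dimensions `r × s × 1 × ⋯ × 1`): strictly increasing
row and column selections together with one index in each extra dimension
(strict monotonicity is vacuous on an index set of size one). -/
def DContains {r s n e : ℕ} (P : Fin r → Fin s → Bool)
    (B : Fin n → Fin n → (Fin e → Fin n) → Bool) : Prop :=
  ∃ f : Fin r → Fin n, ∃ g : Fin s → Fin n, ∃ z : Fin e → Fin n,
    StrictMono f ∧ StrictMono g ∧ ∀ i j, P i j = true → B (f i) (g j) z = true

/-- Changing the entry of a `d`-dimensional 0-1 matrix at `(i, j, z)` to a one. -/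
def dFlipEntry {n e : ℕ} (B : Fin n → Fin n → (Fin e → Fin n) → Bool)
    (i j : Fin n) (z : Fin e → Fin n) : Fin n → Fin n → (Fin e → Fin n) → Bool :=
  fun i' j' z' => if i' = i ∧ j' = j ∧ z' = z then true else B i' j' z'

/-- `B` is saturating for the `d`-dimensional embedding `P_d` of `P`. -/
def DSaturating {r s n e : ℕ} (P : Fin r → Fin s → Bool)
    (B : Fin n → Fin n → (Fin e → Fin n) → Bool) : Prop :=
  ¬ DContains P B ∧ ∀ i j z, B i j z = false → DContains P (dFlipEntry B i j z)

/-- Number of one entries of a `d`-dimensional 0-1 matrix. -/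
def onesCountD {n e : ℕ} (B : Fin n → Fin n → (Fin e → Fin n) → Bool) : ℕ :=
  (Finset.univ.filter fun p : Fin n × Fin n × (Fin e → Fin n) => B p.1 p.2.1 p.2.2 = true).card

/-- `dsat n e P = sat(n, P_d, d)` with `e = d - 2`: minimum number of ones in a
`d`-dimensional 0-1 matrix of side `n` saturating for `P_d`. -/
noncomputable def dsat (n e : ℕ) {r s : ℕ} (P : Fin r → Fin s → Bool) : ℕ :=
  sInf {m | ∃ B : Fin n → Fin n → (Fin e → Fin n) → Bool, DSaturating P B ∧ onesCountD B = m}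

/-- If `C` is a `d`-dimensional side-`n` 0-1 matrix saturating for `P_d`, then every
2-dimensional slice of `C` (with the last `d-2` coordinates fixed) is an `n × n`
matrix saturating for `P`; hence `C` has at least `n^(d-2) · sat(n, P)` ones, and
`sat(n, P_d, d) ≥ n^(d-2) · sat(n, P)` (here `e = d - 2`). -/

theorem slice_sat {r s n e : ℕ} {P : Fin r → Fin s → Bool}
    {B : Fin n → Fin n → (Fin e → Fin n) → Bool} (hB : DSaturating P B)
    (z : Fin e → Fin n) : Saturating P (fun i j => B i j z) := by
  constructor
  · rintro ⟨f, g, hf, hg, h⟩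
    exact hB.1 ⟨f, g, z, hf, hg, h⟩
  · intro i j hij
    obtain ⟨f, g, z', hf, hg, h⟩ := hB.2 i j z hij
    by_cases hz : z' = z
    · subst hz
      refine ⟨f, g, hf, hg, fun a b hab => ?_⟩
      simpa [flipEntry, dFlipEntry] using h a b hab
    · exact absurd ⟨f, g, z', hf, hg, fun a b hab => by
        simpa [dFlipEntry, hz] using h a b hab⟩ hB.1

theorem ones_sum {n e : ℕ} (B : Fin n → Fin n → (Fin e → Fin n) → Bool) :
    onesCountD B = ∑ z : Fin e → Fin n, onesCount (fun i j => B i j z) := by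
  unfold onesCountD onesCount
  rw [Finset.card_eq_sum_card_fiberwise
    (f := fun p : Fin n × Fin n × (Fin e → Fin n) => p.2.2) (t := Finset.univ)
    (fun _ _ => Finset.mem_univ _)]
  refine Finset.sum_congr rfl fun z _ => ?_
  refine Finset.card_nbij' (fun p => (p.1, p.2.1)) (fun q => (q.1, q.2, z)) ?_ ?_ ?_ ?_ <;>
    simp +contextual [Prod.ext_iff]
  intro a b
  simp only [Finset.coe_filter, Finset.mem_coe, Finset.mem_filter, Finset.mem_univ, true_and,
    Set.mem_setOf_eq] at b ⊢
  obtain ⟨h, rfl⟩ := b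
  exact h
  · intro q hq
    simpa using hq
  · rintro ⟨a, b, c⟩ h
    simp only [Finset.coe_filter, Finset.mem_coe, Finset.mem_filter, Finset.mem_univ, true_and,
      Set.mem_setOf_eq] at h
    obtain ⟨_, rfl⟩ := h
    rfl
  · intro q _
    rfl

theorem dsat_lb {r s n e : ℕ} {P : Fin r → Fin s → Bool}
    {B : Fin n → Fin n → (Fin e → Fin n) → Bool} (hB : DSaturating P B) :
    n ^ e * sat n P ≤ onesCountD B := by
  rw [ones_sum]
  have h1 : ∀ z : Fin e → Fin n, sat n P ≤ onesCount (fun i j => B i j z) :=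
    fun z => Nat.sInf_le ⟨_, slice_sat hB z, rfl⟩
  calc n ^ e * sat n P = ∑ _z : Fin e → Fin n, sat n P := by
        simp [Finset.sum_const, Fintype.card_fun, mul_comm]
    _ ≤ _ := Finset.sum_le_sum fun z _ => h1 z

theorem stmt11 {r s n e : ℕ} (P : Fin r → Fin s → Bool)
    (C : Fin n → Fin n → (Fin e → Fin n) → Bool) (hC : DSaturating P C) :
    (∀ z : Fin e → Fin n, Saturating P (fun i j => C i j z)) ∧
    n ^ e * sat n P ≤ onesCountD C ∧
    n ^ e * sat n P ≤ dsat n e P := by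
  refine ⟨fun z => slice_sat hC z, dsat_lb hC, ?_⟩
  refine le_csInf ⟨_, C, hC, rfl⟩ ?_
  rintro m ⟨B, hB, rfl⟩
  exact dsat_lb hB
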